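/- Let J have the hypergeometric distribution P(J = j) = C(k,j) C(m−k, k−j)/C(m,k) for 0 ≤ j ≤ k, where k = √(b m log m) ≤ m/2 and b > 0. Then E[e^J] ≤ (1 + (e−1) k/m)^k (1 − k/m)^{−k} ≤ m^{be}, using (1 − k/m)^{−k} ≤ e^{k²/m} and (1 + (e−1)k/m)^k ≤ e^{(e−1)k²/m}. -/

import Mathlib

open Real

open Finset in
lemma prodIneq (m k j : ℕ) (hj : j ≤ k) (hkm : 2 * k ≤ m) :
    (m - k) ^ j * (m - k).descFactorial (k - j) * k.descFactorial j
      ≤ k ^ j * m.descFactorial k := by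
  have hfilter : (Finset.range k).filter (fun i => i < j) = Finset.range j := by
    ext i; simp; omega
  have hfilter' : (Finset.range k).filter (fun i => ¬ i < j) = Finset.Ico j k := by
    ext i; simp; omega
  have hlhs : (m - k) ^ j * (m - k).descFactorial (k - j) * k.descFactorial j
      = ∏ i ∈ Finset.range k,
          (if i < j then (m - k) * (k - i) else (m - k) - (i - j)) := by
    rw [Finset.prod_ite, hfilter, hfilter', Finset.prod_mul_distrib,
      Finset.prod_const, Finset.card_range, Finset.prod_Ico_eq_prod_range,
      Nat.descFactorial_eq_prod_range k j, Nat.descFactorial_eq_prod_range (m-k) (k-j)]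
    have : ∀ i ∈ Finset.range (k - j), (m - k) - (j + i - j) = (m - k) - i := by
      intro i _; congr 1; omega
    rw [Finset.prod_congr rfl this]
    ring
  have hrhs : k ^ j * m.descFactorial k
      = ∏ i ∈ Finset.range k, (if i < j then k * (m - i) else (m - i)) := by
    have : ∀ i ∈ Finset.range k, (if i < j then k * (m - i) else (m - i))
        = (if i < j then k else 1) * (m - i) := by
      intro i _; split <;> simp
    rw [Finset.prod_congr rfl this, Finset.prod_mul_distrib, Finset.prod_ite,
      hfilter, hfilter', Finset.prod_const, Finset.prod_const, Finset.card_range,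
      Nat.descFactorial_eq_prod_range m k]
    simp
  rw [hlhs, hrhs]
  apply Finset.prod_le_prod'
  intro i hi
  simp only [Finset.mem_range] at hi
  split
  · rename_i h
    obtain ⟨a, rfl⟩ : ∃ a, m = k + a := ⟨m - k, by omega⟩
    have ha : k ≤ a := by omega
    obtain ⟨d, rfl⟩ : ∃ d, k = i + d := ⟨k - i, by omega⟩
    have h1 : i + d + a - (i + d) = a := by omega
    have h2 : i + d - i = d := by omega
    have h3 : i + d + a - i = d + a := by omega
    rw [h1, h2, h3]
    nlinarith
  · omega

lemma keyNat (m k j : ℕ) (hj : j ≤ k) (hkm : 2 * k ≤ m) :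
    (m - k) ^ j * (m - k).choose (k - j) ≤ k ^ j * m.choose k := by
  have h := prodIneq m k j hj hkm
  rw [Nat.descFactorial_eq_factorial_mul_choose (m-k) (k-j),
    Nat.descFactorial_eq_factorial_mul_choose k j,
    Nat.descFactorial_eq_factorial_mul_choose m k,
    ← Nat.choose_mul_factorial_mul_factorial hj] at h
  have hcpos : 0 < Nat.factorial (k - j) * (Nat.factorial j * k.choose j) := by
    have := Nat.choose_pos hj
    positivity
  have h2 : ((m - k) ^ j * (m - k).choose (k - j))
        * (Nat.factorial (k - j) * (Nat.factorial j * k.choose j))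
      ≤ (k ^ j * m.choose k)
        * (Nat.factorial (k - j) * (Nat.factorial j * k.choose j)) := by
    calc ((m - k) ^ j * (m - k).choose (k - j))
          * (Nat.factorial (k - j) * (Nat.factorial j * k.choose j))
        = (m - k) ^ j * (Nat.factorial (k - j) * (m - k).choose (k - j))
            * (Nat.factorial j * k.choose j) := by ring
      _ ≤ k ^ j * (k.choose j * Nat.factorial j * Nat.factorial (k - j) * m.choose k) := h
      _ = (k ^ j * m.choose k)
            * (Nat.factorial (k - j) * (Nat.factorial j * k.choose j)) := by ring
  exact Nat.le_of_mul_le_mul_right h2 hcpos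

lemma polyIneq {E x : ℝ} (hE1 : (2.71:ℝ) ≤ E) (hE2 : E ≤ (2.72:ℝ))
    (hx0 : 0 ≤ x) (hx : x ≤ 1/2) :
    1 + (E - 1) * x ≤ (1 - x) * (1 + E*x + (E*x)^2/2 + (E*x)^3/6 + (E*x)^4/24) := by
  have hE2lo : (7.3441 : ℝ) ≤ E^2 := by nlinarith
  have hE2hi : E^2 ≤ (7.3984 : ℝ) := by nlinarith
  have hE3lo : (19.9025 : ℝ) ≤ E^3 := by nlinarith
  have hE3hi : E^3 ≤ (20.124 : ℝ) := by nlinarith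
  have hE4lo : (53.9358 : ℝ) ≤ E^4 := by nlinarith
  have hE4hi : E^4 ≤ (54.74 : ℝ) := by nlinarith
  have hx2 : x^2 ≤ 1/4 := by nlinarith
  have hx3 : x^3 ≤ 1/8 := by nlinarith
  have hc1 : x*(E^2/2 - E^3/6) ≤ (1/2)*(E^2/2 - E^3/6) :=
    mul_le_mul_of_nonneg_right hx (by nlinarith)
  have hc2 : x^2*(E^3/6 - E^4/24) ≤ (1/4)*(E^3/6 - E^4/24) :=
    mul_le_mul_of_nonneg_right hx2 (by nlinarith)
  have hc3 : x^3*(E^4/24) ≤ (1/8)*(E^4/24) :=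
    mul_le_mul_of_nonneg_right hx3 (by nlinarith)
  have hB : 0 ≤ (E^2/2 - E) - x*(E^2/2 - E^3/6) - x^2*(E^3/6 - E^4/24) - x^3*(E^4/24) := by
    linarith [hc1, hc2, hc3]
  have hx2B := mul_nonneg (sq_nonneg x) hB
  nlinarith [hx2B]

lemma expIneq {x : ℝ} (hx0 : 0 ≤ x) (hx : x ≤ 1/2) :
    1 + (Real.exp 1 - 1) * x ≤ (1 - x) * Real.exp (Real.exp 1 * x) := by
  have hE1 : (2.7182818283 : ℝ) < Real.exp 1 := Real.exp_one_gt_d9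
  have hE2 : Real.exp 1 < 2.7182818286 := Real.exp_one_lt_d9
  have hEx : 0 ≤ Real.exp 1 * x := by positivity
  have hsum := Real.sum_le_exp_of_nonneg hEx 5
  have h : ∑ i ∈ Finset.range 5, (Real.exp 1 * x)^i / (Nat.factorial i) =
      1 + Real.exp 1*x + (Real.exp 1*x)^2/2 + (Real.exp 1*x)^3/6 + (Real.exp 1*x)^4/24 := by
    simp [Finset.sum_range_succ, Nat.factorial]
    try ring
  have hsum' : 1 + Real.exp 1*x + (Real.exp 1*x)^2/2 + (Real.exp 1*x)^3/6
      + (Real.exp 1*x)^4/24 ≤ Real.exp (Real.exp 1 * x) := by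
    rw [← h]; exact hsum
  have h1x : (0:ℝ) ≤ 1 - x := by linarith
  calc 1 + (Real.exp 1 - 1) * x
      ≤ (1 - x) * (1 + Real.exp 1*x + (Real.exp 1*x)^2/2 + (Real.exp 1*x)^3/6
          + (Real.exp 1*x)^4/24) :=
        polyIneq (by linarith) (by linarith) hx0 hx
    _ ≤ (1 - x) * Real.exp (Real.exp 1 * x) := mul_le_mul_of_nonneg_left hsum' h1x

/-- Let J have the hypergeometric distribution
P(J = j) = C(k,j) C(m−k,k−j)/C(m,k) for 0 ≤ j ≤ k, where k = √(b m log m) ≤ m/2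
and b > 0. Then E[e^J] ≤ (1 + (e−1)k/m)^k (1 − k/m)^{−k} ≤ m^{be}. -/
theorem hypergeometric_exp_moment_bound (m k : ℕ) (b : ℝ) (hb : 0 < b)
    (hk : 0 < k) (hkm : 2 * k ≤ m)
    (hkdef : (k : ℝ) = Real.sqrt (b * m * Real.log m)) :
    (∑ j ∈ Finset.range (k + 1),
        ((Nat.choose k j * Nat.choose (m - k) (k - j) : ℝ) / Nat.choose m k)
          * Real.exp j)
      ≤ (1 + (Real.exp 1 - 1) * k / m) ^ k * (1 - (k : ℝ) / m) ^ (-(k : ℤ)) ∧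
    (1 + (Real.exp 1 - 1) * k / m) ^ k * (1 - (k : ℝ) / m) ^ (-(k : ℤ))
      ≤ (m : ℝ) ^ (b * Real.exp 1) := by
  have hkm' : k ≤ m := by omega
  have hkltm : k < m := by omega
  have hm1 : 0 < m := by omega
  have hm0 : (0:ℝ) < m := by exact_mod_cast hm1
  have hk0 : (0:ℝ) < k := by exact_mod_cast hk
  have hc : (0:ℝ) < (m:ℝ) - k := by
    have : (k:ℝ) < m := by exact_mod_cast hkltm
    linarith
  have hcast : ((m - k : ℕ) : ℝ) = (m:ℝ) - k := by
    push_cast [Nat.cast_sub hkm']; ring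
  have hx0 : (0:ℝ) ≤ (k:ℝ)/m := by positivity
  have hxhalf : (k:ℝ)/m ≤ 1/2 := by
    rw [div_le_div_iff₀ hm0 (by norm_num)]
    have : (2*k : ℝ) ≤ m := by exact_mod_cast hkm
    linarith
  have hB : (0:ℝ) < 1 - (k:ℝ)/m := by
    have : (k:ℝ)/m < 1 := by
      rw [div_lt_one hm0]; exact_mod_cast hkltm
    linarith
  have hE1 : (1:ℝ) < Real.exp 1 := by
    have := Real.exp_one_gt_d9; linarith
  have hA : (0:ℝ) < 1 + (Real.exp 1 - 1) * k / m := by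
    have h1 : (0:ℝ) ≤ (Real.exp 1 - 1) * k / m :=
      div_nonneg (mul_nonneg (by linarith) hk0.le) hm0.le
    linarith
  have hChoosePos : (0:ℝ) < (m.choose k : ℝ) := by
    exact_mod_cast Nat.choose_pos hkm'
  set E := Real.exp 1 with hEdef
  -- Part 1
  have part1 : (∑ j ∈ Finset.range (k + 1),
        ((Nat.choose k j * Nat.choose (m - k) (k - j) : ℝ) / Nat.choose m k)
          * Real.exp j)
      ≤ (1 + (E - 1) * k / m) ^ k * (1 - (k : ℝ) / m) ^ (-(k : ℤ)) := by
    have hpt : ∀ j ∈ Finset.range (k+1),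
        ((Nat.choose k j * Nat.choose (m - k) (k - j) : ℝ) / Nat.choose m k)
          * Real.exp j
        ≤ (E * ((k:ℝ)/((m:ℝ)-k))) ^ j * 1 ^ (k - j) * (k.choose j : ℝ) := by
      intro j hj
      rw [Finset.mem_range] at hj
      have hjk : j ≤ k := by omega
      have hexpj : Real.exp (j:ℝ) = E ^ j := by
        rw [hEdef, ← Real.exp_nat_mul, mul_one]
      have hkeyR : ((m - k).choose (k - j) : ℝ) * ((m:ℝ) - k)^j
          ≤ (k:ℝ)^j * (m.choose k : ℝ) := by
        have h := keyNat m k j hjk hkm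
        have h2 : (((m - k) ^ j * (m - k).choose (k - j) : ℕ) : ℝ)
            ≤ ((k ^ j * m.choose k : ℕ) : ℝ) := by exact_mod_cast h
        push_cast [hcast] at h2
        calc ((m - k).choose (k - j) : ℝ) * ((m:ℝ) - k)^j
            = ((m:ℝ) - k)^j * ((m - k).choose (k - j) : ℝ) := by ring
          _ ≤ (k:ℝ)^j * (m.choose k : ℝ) := by
              convert h2 using 2 <;> push_cast [hcast] <;> ring
      have hdiv : ((m - k).choose (k - j) : ℝ) / (m.choose k : ℝ)
          ≤ ((k:ℝ)/((m:ℝ)-k)) ^ j := by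
        rw [div_pow, div_le_div_iff₀ hChoosePos (by positivity)]
        exact hkeyR
      calc ((Nat.choose k j * Nat.choose (m - k) (k - j) : ℝ) / Nat.choose m k)
            * Real.exp j
          = (k.choose j : ℝ) * E ^ j
              * (((m - k).choose (k - j) : ℝ) / (m.choose k : ℝ)) := by
            rw [hexpj]; ring
        _ ≤ (k.choose j : ℝ) * E ^ j * ((k:ℝ)/((m:ℝ)-k)) ^ j := by
            apply mul_le_mul_of_nonneg_left hdiv
            positivity
        _ = (E * ((k:ℝ)/((m:ℝ)-k))) ^ j * 1 ^ (k - j) * (k.choose j : ℝ) := by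
            rw [mul_pow, one_pow]; ring
    have hsum := Finset.sum_le_sum hpt
    rw [← add_pow] at hsum
    refine hsum.trans (le_of_eq ?_)
    have hzpow : (1 - (k:ℝ)/m) ^ (-(k : ℤ)) = ((1 - (k:ℝ)/m) ^ k)⁻¹ := by
      rw [zpow_neg, zpow_natCast]
    rw [hzpow, ← div_eq_mul_inv, ← div_pow]
    congr 1
    rw [eq_div_iff hB.ne']
    field_simp
    ring
  refine ⟨part1, ?_⟩
  -- Part 2
  have hexpI := expIneq hx0 hxhalf
  have hABle : (1 + (E - 1) * k / m) / (1 - (k:ℝ)/m) ≤ Real.exp (E * ((k:ℝ)/m)) := by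
    rw [div_le_iff₀ hB]
    calc 1 + (E - 1) * k / m = 1 + (E - 1) * ((k:ℝ)/m) := by ring
      _ ≤ (1 - (k:ℝ)/m) * Real.exp (E * ((k:ℝ)/m)) := hexpI
      _ = Real.exp (E * ((k:ℝ)/m)) * (1 - (k:ℝ)/m) := by ring
  have hzpow : (1 - (k:ℝ)/m) ^ (-(k : ℤ)) = ((1 - (k:ℝ)/m) ^ k)⁻¹ := by
    rw [zpow_neg, zpow_natCast]
  have harg : 0 < b * m * Real.log m := by
    have hs : 0 < Real.sqrt (b * m * Real.log m) := by rw [← hkdef]; exact hk0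
    exact (Real.sqrt_pos).mp hs
  have hk2 : (k:ℝ)^2 = b * m * Real.log m := by
    rw [hkdef, Real.sq_sqrt harg.le]
  have hexpeq : Real.exp (E * ((k:ℝ)/m)) ^ k = (m : ℝ) ^ (b * E) := by
    rw [← Real.exp_nat_mul, Real.rpow_def_of_pos hm0]
    congr 1
    have hm0' : (m:ℝ) ≠ 0 := ne_of_gt hm0
    field_simp
    nlinarith [hk2]
  calc (1 + (E - 1) * k / m) ^ k * (1 - (k:ℝ)/m) ^ (-(k : ℤ))
      = ((1 + (E - 1) * k / m) / (1 - (k:ℝ)/m)) ^ k := by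
        rw [hzpow, div_pow]; ring
    _ ≤ Real.exp (E * ((k:ℝ)/m)) ^ k := by
        exact pow_le_pow_left₀ (div_nonneg hA.le hB.le) hABle k
    _ = (m : ℝ) ^ (b * E) := hexpeq
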